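/- Any probability distribution P(x,y) on ℝ² satisfying P(x,y) = P(-x,-y)e^x with finite second moment of y obeys Var(y) ≥ ⟨y⟩²·f(⟨x⟩), where f(x) = csch²(g(x/2)) and g is the inverse of t ↦ t·tanh(t) on [0,∞). -/

import Mathlib

open MeasureTheory Real

/- ## Auxiliary analytic lemmas -/

lemma aux_L1 (t : ℝ) (ht : 0 ≤ t) : t ≤ Real.sinh t * Real.cosh t := by
  have h1 : t ≤ Real.sinh t := by
    rcases eq_or_lt_of_le ht with h | h
    · simp [← h]
    · exact (Real.self_lt_sinh_iff.2 h).le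
  nlinarith [Real.one_le_cosh t, Real.sinh_nonneg_iff.2 ht]

lemma aux_L2 (t : ℝ) (ht : 0 ≤ t) : Real.tanh t ≤ t := by
  have key : MonotoneOn (fun t : ℝ => t * Real.cosh t - Real.sinh t) (Set.Ici 0) := by
    apply monotoneOn_of_deriv_nonneg (convex_Ici 0)
    · exact (Continuous.continuousOn (by continuity))
    · intro x hx
      exact (((hasDerivAt_id' (x:=x)).mul (Real.hasDerivAt_cosh x)).sub
        (Real.hasDerivAt_sinh x)).differentiableAt.differentiableWithinAt
    · intro x hx
      rw [interior_Ici, Set.mem_Ioi] at hx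
      rw [(show HasDerivAt (fun t : ℝ => t * Real.cosh t - Real.sinh t) _ x from
        ((hasDerivAt_id' (x:=x)).mul (Real.hasDerivAt_cosh x)).sub
        (Real.hasDerivAt_sinh x)).deriv]
      nlinarith [Real.sinh_nonneg_iff.2 hx.le]
  have h0 := key (Set.self_mem_Ici) (Set.mem_Ici.2 ht) ht
  simp at h0
  rw [Real.tanh_eq_sinh_div_cosh, div_le_iff₀ (Real.cosh_pos t)]
  linarith

lemma aux_tanh_nonneg (t : ℝ) (ht : 0 ≤ t) : 0 ≤ Real.tanh t := by
  rw [Real.tanh_eq_sinh_div_cosh]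
  exact div_nonneg (Real.sinh_nonneg_iff.2 ht) (Real.cosh_pos t).le

lemma aux_tanh_sq_le_one (x : ℝ) : Real.tanh x ^ 2 ≤ 1 := by
  rw [Real.tanh_eq_sinh_div_cosh, div_pow, div_le_one (by positivity)]
  nlinarith [Real.cosh_sq_sub_sinh_sq x]

lemma aux_hdtanh (t : ℝ) : HasDerivAt Real.tanh (1 / Real.cosh t ^ 2) t := by
  have h := (Real.hasDerivAt_sinh t).div (Real.hasDerivAt_cosh t) (ne_of_gt (Real.cosh_pos t))
  have he : (fun x => Real.sinh x / Real.cosh x) = Real.tanh := by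
    funext x; rw [Real.tanh_eq_sinh_div_cosh]
  rw [show (Real.sinh / Real.cosh) = Real.tanh from he] at h
  refine h.congr_deriv ?_
  have := Real.cosh_sq_sub_sinh_sq t
  rw [div_left_inj' (pow_ne_zero 2 (Real.cosh_pos t).ne')]
  nlinarith

lemma aux_cont_tanh : Continuous Real.tanh := by
  have : Differentiable ℝ Real.tanh := fun x => (aux_hdtanh x).differentiableAt
  exact this.continuous

noncomputable def auxP (t : ℝ) : ℝ := Real.cosh t ^ 2 + t * Real.cosh t / Real.sinh t

lemma auxP_deriv (t : ℝ) (ht : 0 < t) :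
    HasDerivAt auxP
      (2 * Real.cosh t ^ 1 * Real.sinh t
        + ((1 * Real.cosh t + t * Real.sinh t) * Real.sinh t - t * Real.cosh t * Real.cosh t)
          / Real.sinh t ^ 2) t := by
  have hs : Real.sinh t ≠ 0 := ne_of_gt (Real.sinh_pos_iff.2 ht)
  exact ((Real.hasDerivAt_cosh t).pow 2).add
    (((hasDerivAt_id' (x:=t)).mul (Real.hasDerivAt_cosh t)).div (Real.hasDerivAt_sinh t) hs)

lemma auxP_mono : MonotoneOn auxP (Set.Ioi 0) := by
  apply monotoneOn_of_deriv_nonneg (convex_Ioi 0)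
  · intro x hx
    exact (auxP_deriv x hx).continuousAt.continuousWithinAt
  · intro x hx
    rw [interior_Ioi] at hx
    exact (auxP_deriv x hx).differentiableAt.differentiableWithinAt
  · intro x hx
    rw [interior_Ioi] at hx
    rw [(auxP_deriv x hx).deriv]
    have hs : 0 < Real.sinh x := Real.sinh_pos_iff.2 hx
    have hch : 0 < Real.cosh x := Real.cosh_pos x
    have h1 : x ≤ Real.sinh x * Real.cosh x := aux_L1 x hx.le
    have h2 : Real.cosh x ^ 2 - Real.sinh x ^ 2 = 1 := Real.cosh_sq_sub_sinh_sq x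
    have key : (1 * Real.cosh x + x * Real.sinh x) * Real.sinh x - x * Real.cosh x * Real.cosh x
        = Real.sinh x * Real.cosh x - x := by linear_combination (-x) * h2
    rw [key]
    have h3 : 0 ≤ (Real.sinh x * Real.cosh x - x) / Real.sinh x ^ 2 :=
      div_nonneg (by linarith) (by positivity)
    nlinarith

lemma aux_tangent_pos (u : ℝ) (hu : 0 < u) (t : ℝ) (ht : 0 ≤ t) :
    Real.tanh t ^ 2 ≤ Real.tanh u ^ 2
      + (2 * Real.sinh u / (Real.cosh u * (Real.sinh u * Real.cosh u + u)))
        * (t * Real.tanh t - u * Real.tanh u) := by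
  set c : ℝ := 2 * Real.sinh u / (Real.cosh u * (Real.sinh u * Real.cosh u + u)) with hc
  set G : ℝ → ℝ := fun x => c * (x * Real.tanh x) - Real.tanh x ^ 2 with hGdef
  have hsu : 0 < Real.sinh u := Real.sinh_pos_iff.2 hu
  have hchu : 0 < Real.cosh u := Real.cosh_pos u
  have hD : 0 < Real.cosh u * (Real.sinh u * Real.cosh u + u) := by positivity
  have hGd : ∀ x : ℝ, HasDerivAt G
      (c * (1 * Real.tanh x + x * (1 / Real.cosh x ^ 2))
        - 2 * Real.tanh x ^ 1 * (1 / Real.cosh x ^ 2)) x := by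
    intro x
    exact (((hasDerivAt_id' (x:=x)).mul (aux_hdtanh x)).const_mul c).sub ((aux_hdtanh x).pow 2)
  have hGid : ∀ x : ℝ, 0 < x →
      c * (1 * Real.tanh x + x * (1 / Real.cosh x ^ 2))
        - 2 * Real.tanh x ^ 1 * (1 / Real.cosh x ^ 2)
      = (2 * Real.sinh u * Real.sinh x
          / (Real.cosh u * (Real.sinh u * Real.cosh u + u) * Real.cosh x ^ 3))
        * (auxP x - auxP u) := by
    intro x hx
    have hs : 0 < Real.sinh x := Real.sinh_pos_iff.2 hx
    have hch : 0 < Real.cosh x := Real.cosh_pos x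
    rw [hc, auxP, auxP, Real.tanh_eq_sinh_div_cosh]
    field_simp
  have hanti : AntitoneOn G (Set.Icc 0 u) := by
    apply antitoneOn_of_deriv_nonpos (convex_Icc 0 u)
    · intro x hx; exact (hGd x).continuousAt.continuousWithinAt
    · intro x hx; exact (hGd x).differentiableAt.differentiableWithinAt
    · intro x hx
      rw [interior_Icc] at hx
      rw [(hGd x).deriv, hGid x hx.1]
      have hP : auxP x ≤ auxP u := auxP_mono (Set.mem_Ioi.2 hx.1) (Set.mem_Ioi.2 hu) hx.2.le
      have hs : 0 < Real.sinh x := Real.sinh_pos_iff.2 hx.1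
      have hch : 0 < Real.cosh x := Real.cosh_pos x
      have hK : 0 ≤ 2 * Real.sinh u * Real.sinh x
          / (Real.cosh u * (Real.sinh u * Real.cosh u + u) * Real.cosh x ^ 3) := by positivity
      exact mul_nonpos_of_nonneg_of_nonpos hK (by linarith)
  have hmono : MonotoneOn G (Set.Ici u) := by
    apply monotoneOn_of_deriv_nonneg (convex_Ici u)
    · intro x hx; exact (hGd x).continuousAt.continuousWithinAt
    · intro x hx; exact (hGd x).differentiableAt.differentiableWithinAt
    · intro x hx
      rw [interior_Ici, Set.mem_Ioi] at hx
      rw [(hGd x).deriv, hGid x (lt_trans hu hx)]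
      have hP : auxP u ≤ auxP x :=
        auxP_mono (Set.mem_Ioi.2 hu) (Set.mem_Ioi.2 (lt_trans hu hx)) hx.le
      have hs : 0 < Real.sinh x := Real.sinh_pos_iff.2 (lt_trans hu hx)
      have hch : 0 < Real.cosh x := Real.cosh_pos x
      have hK : 0 ≤ 2 * Real.sinh u * Real.sinh x
          / (Real.cosh u * (Real.sinh u * Real.cosh u + u) * Real.cosh x ^ 3) := by positivity
      exact mul_nonneg hK (by linarith)
  have hGle : G u ≤ G t := by
    rcases le_or_gt t u with h | h
    · exact hanti (Set.mem_Icc.2 ⟨ht, h⟩) (Set.mem_Icc.2 ⟨hu.le, le_refl u⟩) h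
    · exact hmono (Set.self_mem_Ici) (Set.mem_Ici.2 h.le) h.le
  simp only [hGdef] at hGle
  nlinarith [hGle]

lemma aux_tangent (u : ℝ) (hu : 0 ≤ u) :
    ∃ c : ℝ, ∀ t : ℝ,
      Real.tanh t ^ 2 ≤ Real.tanh u ^ 2 + c * (t * Real.tanh t - u * Real.tanh u) := by
  have habs : ∀ t : ℝ, Real.tanh t ^ 2 = Real.tanh |t| ^ 2 ∧ t * Real.tanh t = |t| * Real.tanh |t| := by
    intro t
    rcases le_or_gt 0 t with h | h
    · rw [abs_of_nonneg h]; exact ⟨rfl, rfl⟩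
    · rw [abs_of_neg h, Real.tanh_neg]
      constructor <;> ring
  rcases eq_or_lt_of_le hu with h | h
  · refine ⟨1, fun t => ?_⟩
    rw [← h, Real.tanh_zero]
    have h1 := aux_L2 |t| (abs_nonneg t)
    have h2 := aux_tanh_nonneg |t| (abs_nonneg t)
    have h3 := (habs t).1
    have h4 := (habs t).2
    nlinarith
  · refine ⟨2 * Real.sinh u / (Real.cosh u * (Real.sinh u * Real.cosh u + u)), fun t => ?_⟩
    have h5 := aux_tangent_pos u h |t| (abs_nonneg t)
    rw [(habs t).1, (habs t).2]
    exact h5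

lemma aux_hkey (x : ℝ) : Real.tanh (x/2) * (1 + Real.exp (-x)) = 1 - Real.exp (-x) := by
  have h2 : Real.exp (x/2) * Real.exp (-(x/2)) = 1 := by
    rw [← Real.exp_add]; ring_nf; exact Real.exp_zero
  have h1 : Real.exp (-x) = Real.exp (-(x/2)) * Real.exp (-(x/2)) := by
    rw [← Real.exp_add]; ring_nf
  rw [Real.tanh_eq_sinh_div_cosh, Real.sinh_eq, Real.cosh_eq, h1]
  have h3 : 0 < Real.exp (x/2) + Real.exp (-(x/2)) := by positivity
  field_simp
  linear_combination (2 * Real.exp (-(x/2))) * h2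

/-- Any probability distribution on ℝ² satisfying the exchange fluctuation theorem
symmetry `P(x,y) = P(-x,-y) e^x` (expressed as: the pushforward under negation equals
the original measure with density `e^{-x}`) and having a finite second moment of `y`
obeys the generalized TUR `Var(y) ≥ ⟨y⟩² f(⟨x⟩)`, where `f x = csch²(g (x/2))` and
`g` is the inverse of `t ↦ t tanh t` on `[0, ∞)`. -/
theorem generalized_TUR
    (g : ℝ → ℝ)
    (hg : ∀ x ∈ Set.Ici (0 : ℝ), g x ∈ Set.Ici (0 : ℝ) ∧ g x * Real.tanh (g x) = x)
    (μ : Measure (ℝ × ℝ)) [IsProbabilityMeasure μ]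
    (hsym : μ.map (fun z : ℝ × ℝ => (-z.1, -z.2))
      = μ.withDensity (fun z => ENNReal.ofReal (Real.exp (-z.1))))
    (hx : Integrable (fun z : ℝ × ℝ => z.1) μ)
    (hy2 : Integrable (fun z : ℝ × ℝ => z.2 ^ 2) μ) :
    (∫ z : ℝ × ℝ, z.2 ^ 2 ∂μ) - (∫ z : ℝ × ℝ, z.2 ∂μ) ^ 2
      ≥ (∫ z : ℝ × ℝ, z.2 ∂μ) ^ 2
        * (1 / Real.sinh (g ((∫ z : ℝ × ℝ, z.1 ∂μ) / 2))) ^ 2 := by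
  -- change of variables machinery
  have hneg : Measurable (fun z : ℝ × ℝ => (-z.1, -z.2)) :=
    (measurable_fst.neg.prodMk measurable_snd.neg)
  have hwm : Measurable (fun z : ℝ × ℝ => (Real.exp (-z.1)).toNNReal) :=
    (measurable_fst.neg.exp).real_toNNReal
  have hsmul_eq : ∀ f : ℝ × ℝ → ℝ,
      (fun z : ℝ × ℝ => ((Real.exp (-z.1)).toNNReal : NNReal) • f z)
        = fun z : ℝ × ℝ => Real.exp (-z.1) * f z := by
    intro f; funext z
    simp [NNReal.smul_def, Real.coe_toNNReal _ (Real.exp_nonneg _)]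
  have hwd : μ.withDensity (fun z => ENNReal.ofReal (Real.exp (-z.1)))
      = μ.withDensity (fun z => ((Real.exp (-z.1)).toNNReal : ENNReal)) := rfl
  have change : ∀ f : ℝ × ℝ → ℝ, Measurable f →
      ∫ z, f (-z.1, -z.2) ∂μ = ∫ z, Real.exp (-z.1) * f z ∂μ := by
    intro f hf
    have h1 : ∫ z, f z ∂(μ.map (fun z : ℝ × ℝ => (-z.1, -z.2)))
        = ∫ z, f (-z.1, -z.2) ∂μ :=
      integral_map hneg.aemeasurable hf.aestronglyMeasurable
    rw [← h1, hsym, hwd, integral_withDensity_eq_integral_smul hwm f, hsmul_eq f]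
  have changeI : ∀ f : ℝ × ℝ → ℝ, Measurable f →
      (Integrable (fun z : ℝ × ℝ => f (-z.1, -z.2)) μ
        ↔ Integrable (fun z : ℝ × ℝ => Real.exp (-z.1) * f z) μ) := by
    intro f hf
    have h1 : Integrable f (μ.map (fun z : ℝ × ℝ => (-z.1, -z.2)))
        ↔ Integrable (fun z : ℝ × ℝ => f (-z.1, -z.2)) μ :=
      integrable_map_measure hf.aestronglyMeasurable hneg.aemeasurable
    rw [← h1, hsym, hwd, integrable_withDensity_iff_integrable_smul hwm, hsmul_eq f]
  set m := ∫ z : ℝ × ℝ, z.2 ∂μ with hm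
  set S := ∫ z : ℝ × ℝ, z.1 ∂μ with hSdef
  set Y2 := ∫ z : ℝ × ℝ, z.2 ^ 2 ∂μ with hY2def
  -- basic integrabilities
  have hy : Integrable (fun z : ℝ × ℝ => z.2) μ := by
    refine (hy2.add (integrable_const 1)).mono' measurable_snd.aestronglyMeasurable
      (ae_of_all _ fun z => ?_)
    simp only [Real.norm_eq_abs, Pi.add_apply]
    nlinarith [abs_nonneg z.2, sq_abs z.2]
  have hE : Integrable (fun z : ℝ × ℝ => Real.exp (-z.1)) μ := by
    have h := (changeI (fun _ => (1:ℝ)) measurable_const).1 (integrable_const 1)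
    simpa using h
  have hxE : Integrable (fun z : ℝ × ℝ => Real.exp (-z.1) * z.1) μ := by
    exact (changeI (fun z => z.1) measurable_fst).1 hx.neg
  have hyE : Integrable (fun z : ℝ × ℝ => Real.exp (-z.1) * z.2) μ := by
    exact (changeI (fun z => z.2) measurable_snd).1 hy.neg
  have hy2E : Integrable (fun z : ℝ × ℝ => Real.exp (-z.1) * z.2 ^ 2) μ := by
    have h0 : Integrable (fun z : ℝ × ℝ => (-z.2) ^ 2) μ :=
      hy2.congr (ae_of_all _ fun z => by simp only [Pi.sub_apply, Pi.add_apply, Pi.div_apply]; ring)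
    exact (changeI (fun z => z.2 ^ 2) (measurable_snd.pow_const 2)).1 h0
  -- integral identities
  have iE : ∫ z, Real.exp (-z.1) ∂μ = 1 := by
    have h := change (fun _ => (1:ℝ)) measurable_const
    simpa using h.symm
  have ixE : ∫ z, Real.exp (-z.1) * z.1 ∂μ = -S := by
    have h := change (fun z => z.1) measurable_fst
    simp only at h
    rw [← h, integral_neg]
  have iyE : ∫ z, Real.exp (-z.1) * z.2 ∂μ = -m := by
    have h := change (fun z => z.2) measurable_snd
    simp only at h
    rw [← h, integral_neg]
  have iy2E : ∫ z, Real.exp (-z.1) * z.2 ^ 2 ∂μ = Y2 := by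
    have h := change (fun z => z.2 ^ 2) (measurable_snd.pow_const 2)
    simp only at h
    rw [← h]
    show (∫ z : ℝ × ℝ, (-z.2 : ℝ) ^ 2 ∂μ) = Y2
    rw [hY2def]
    exact integral_congr_ae (ae_of_all _ fun z => by simp only [Pi.sub_apply, Pi.add_apply, Pi.div_apply]; ring)
  -- S is nonnegative
  have hq4 : Integrable (fun z : ℝ × ℝ => z.1 * (1 - Real.exp (-z.1))) μ :=
    (hx.sub hxE).congr (ae_of_all _ fun z => by simp only [Pi.sub_apply, Pi.add_apply, Pi.div_apply]; ring)
  have hSint : ∫ z, z.1 * (1 - Real.exp (-z.1)) ∂μ = 2 * S := by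
    have h2 : ∫ z, z.1 * (1 - Real.exp (-z.1)) ∂μ
        = ∫ z, (z.1 - Real.exp (-z.1) * z.1) ∂μ :=
      integral_congr_ae (ae_of_all _ fun z => by simp only [Pi.sub_apply, Pi.add_apply, Pi.div_apply]; ring)
    rw [h2, integral_sub hx hxE, ixE, ← hSdef]; ring
  have hS0 : 0 ≤ S := by
    have h0 : 0 ≤ ∫ z, z.1 * (1 - Real.exp (-z.1)) ∂μ := by
      apply integral_nonneg
      intro z
      rcases le_or_gt 0 z.1 with h | h
      · have he1 : Real.exp (-z.1) ≤ 1 := Real.exp_le_one_iff.2 (by linarith)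
        exact mul_nonneg h (by linarith)
      · have he1 : 1 ≤ Real.exp (-z.1) := by
          rw [← Real.exp_zero]
          exact Real.exp_le_exp.2 (by linarith)
        show (0:ℝ) ≤ z.1 * (1 - Real.exp (-z.1))
        nlinarith [mul_nonneg (neg_nonneg.2 h.le) (by linarith : (0:ℝ) ≤ Real.exp (-z.1) - 1)]
    linarith [hSint]
  obtain ⟨hg0', hgt⟩ := hg (S/2) (Set.mem_Ici.2 (by linarith))
  rw [Set.mem_Ici] at hg0'
  set u := g (S/2) with hudef
  obtain ⟨c, hc⟩ := aux_tangent u hg0'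
  -- the weight function
  have hw2 : Integrable (fun z : ℝ × ℝ => (1 + Real.exp (-z.1)) / 2) μ :=
    ((integrable_const 1).add hE).div_const 2
  have iw : ∫ z, (1 + Real.exp (-z.1)) / 2 ∂μ = 1 := by
    rw [integral_div, integral_add (integrable_const 1) hE, iE]
    simp
  have hwpt : ∀ z : ℝ × ℝ, 0 ≤ (1 + Real.exp (-z.1)) / 2 := fun z => by positivity
  have hq3meas : Measurable (fun z : ℝ × ℝ =>
      Real.tanh (z.1/2)^2 * ((1 + Real.exp (-z.1))/2)) :=
    ((aux_cont_tanh.measurable.comp (measurable_fst.div_const 2)).pow_const 2).mul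
      ((measurable_const.add (measurable_fst.neg.exp)).div_const 2)
  have hq3 : Integrable (fun z : ℝ × ℝ =>
      Real.tanh (z.1/2)^2 * ((1 + Real.exp (-z.1))/2)) μ := by
    refine hw2.mono' hq3meas.aestronglyMeasurable (ae_of_all _ fun z => ?_)
    rw [Real.norm_eq_abs, abs_of_nonneg (mul_nonneg (sq_nonneg _) (hwpt z))]
    nlinarith [aux_tanh_sq_le_one (z.1/2), hwpt z]
  set T := ∫ z, Real.tanh (z.1/2)^2 * ((1 + Real.exp (-z.1))/2) ∂μ with hTdef
  have hT0 : 0 ≤ T := by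
    rw [hTdef]
    exact integral_nonneg fun z => mul_nonneg (sq_nonneg _) (hwpt z)
  -- the two auxiliary integrals
  have hq1 : Integrable (fun z : ℝ × ℝ => z.2^2 * ((1 + Real.exp (-z.1))/2)) μ :=
    ((hy2.add hy2E).div_const 2).congr (ae_of_all _ fun z => by simp only [Pi.sub_apply, Pi.add_apply, Pi.div_apply]; ring)
  have iq1 : ∫ z, z.2^2 * ((1 + Real.exp (-z.1))/2) ∂μ = Y2 := by
    have h2 : ∫ z, z.2^2 * ((1 + Real.exp (-z.1))/2) ∂μ
        = ∫ z, (z.2^2 + Real.exp (-z.1) * z.2^2)/2 ∂μ :=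
      integral_congr_ae (ae_of_all _ fun z => by simp only [Pi.sub_apply, Pi.add_apply, Pi.div_apply]; ring)
    rw [h2, integral_div, integral_add hy2 hy2E, iy2E, ← hY2def]; ring
  have hq2 : Integrable (fun z : ℝ × ℝ => z.2 * (1 - Real.exp (-z.1)) / 2) μ :=
    ((hy.sub hyE).div_const 2).congr (ae_of_all _ fun z => by simp only [Pi.sub_apply, Pi.add_apply, Pi.div_apply]; ring)
  have iq2 : ∫ z, z.2 * (1 - Real.exp (-z.1)) / 2 ∂μ = m := by
    have h2 : ∫ z, z.2 * (1 - Real.exp (-z.1)) / 2 ∂μ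
        = ∫ z, (z.2 - Real.exp (-z.1) * z.2)/2 ∂μ :=
      integral_congr_ae (ae_of_all _ fun z => by simp only [Pi.sub_apply, Pi.add_apply, Pi.div_apply]; ring)
    rw [h2, integral_div, integral_sub hy hyE, iyE, ← hm]; ring
  -- Jensen-type bound on T via the tangent line
  have hTle : T ≤ Real.tanh u ^ 2 := by
    have hgint : Integrable (fun z : ℝ × ℝ =>
        (Real.tanh u ^ 2 - c * (u * Real.tanh u)) * ((1 + Real.exp (-z.1))/2)
          + (c/4) * (z.1 * (1 - Real.exp (-z.1)))) μ :=
      (hw2.const_mul _).add (hq4.const_mul _)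
    have hpt : ∀ z : ℝ × ℝ,
        Real.tanh (z.1/2)^2 * ((1 + Real.exp (-z.1))/2)
          ≤ (Real.tanh u ^ 2 - c * (u * Real.tanh u)) * ((1 + Real.exp (-z.1))/2)
            + (c/4) * (z.1 * (1 - Real.exp (-z.1))) := by
      intro z
      have h1 := mul_le_mul_of_nonneg_right (hc (z.1/2)) (hwpt z)
      have h3 := aux_hkey z.1
      have h2 : (Real.tanh u ^ 2 + c * ((z.1/2) * Real.tanh (z.1/2) - u * Real.tanh u))
            * ((1 + Real.exp (-z.1))/2)
          = (Real.tanh u ^ 2 - c * (u * Real.tanh u)) * ((1 + Real.exp (-z.1))/2)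
            + (c/4) * (z.1 * (1 - Real.exp (-z.1))) := by
        linear_combination (c * z.1 / 4) * h3
      linarith [h1, h2.ge, h2.le]
    have hint : T ≤ ∫ z, ((Real.tanh u ^ 2 - c * (u * Real.tanh u)) * ((1 + Real.exp (-z.1))/2)
          + (c/4) * (z.1 * (1 - Real.exp (-z.1)))) ∂μ := by
      rw [hTdef]
      exact integral_mono_of_nonneg (ae_of_all _ fun z => mul_nonneg (sq_nonneg _) (hwpt z))
        hgint (ae_of_all _ hpt)
    have hval : ∫ z, ((Real.tanh u ^ 2 - c * (u * Real.tanh u)) * ((1 + Real.exp (-z.1))/2)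
          + (c/4) * (z.1 * (1 - Real.exp (-z.1)))) ∂μ
        = (Real.tanh u ^ 2 - c * (u * Real.tanh u)) * 1 + (c/4) * (2*S) := by
      rw [integral_add (hw2.const_mul _) (hq4.const_mul _), integral_const_mul _,
        integral_const_mul _, iw, hSint]
    have hfin : (Real.tanh u ^ 2 - c * (u * Real.tanh u)) * 1 + (c/4) * (2*S)
        = Real.tanh u ^ 2 := by
      linear_combination (-c) * hgt
    linarith [hint, hval.le, hval.ge, hfin.le, hfin.ge]
  -- the Cauchy-Schwarz quadratic
  have hquad : ∀ a : ℝ, 0 ≤ Y2 - 2*a*m + a^2*T := by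
    intro a
    have hnn : 0 ≤ ∫ z, (z.2 - a * Real.tanh (z.1/2))^2 * ((1 + Real.exp (-z.1))/2) ∂μ :=
      integral_nonneg fun z => mul_nonneg (sq_nonneg _) (hwpt z)
    have hpteq : (fun z : ℝ × ℝ => (z.2 - a * Real.tanh (z.1/2))^2 * ((1 + Real.exp (-z.1))/2))
        = fun z : ℝ × ℝ => z.2^2 * ((1 + Real.exp (-z.1))/2)
            - (2*a) * (z.2 * (1 - Real.exp (-z.1)) / 2)
            + a^2 * (Real.tanh (z.1/2)^2 * ((1 + Real.exp (-z.1))/2)) := by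
      funext z
      linear_combination (-(a * z.2)) * (aux_hkey z.1)
    rw [hpteq] at hnn
    have hq12 : Integrable (fun z : ℝ × ℝ => z.2^2 * ((1 + Real.exp (-z.1))/2)
        - (2*a) * (z.2 * (1 - Real.exp (-z.1)) / 2)) μ :=
      (hq1.sub (hq2.const_mul (2*a))).congr
        (ae_of_all _ fun z => by simp only [Pi.sub_apply])
    rw [integral_add hq12 (hq3.const_mul _),
      integral_sub hq1 (hq2.const_mul _), integral_const_mul _, integral_const_mul _,
      iq1, iq2, ← hTdef] at hnn
    linarith [hnn]
  -- conclusion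
  rcases eq_or_ne (Real.tanh u) 0 with h0 | h0
  · have hTz : T = 0 := by
      have hT1 : T ≤ 0 := by rw [h0] at hTle; simpa using hTle
      linarith
    have hY2nn : 0 ≤ Y2 := by
      rw [hY2def]; exact integral_nonneg fun z => sq_nonneg _
    have hm0 : m = 0 := by
      by_contra hm0
      have h1 := hquad ((Y2 + 1)/(2*m))
      rw [hTz] at h1
      have h2 : 2 * ((Y2 + 1)/(2*m)) * m = Y2 + 1 := by field_simp
      nlinarith [h1, h2]
    rw [hm0]
    simpa using hY2nn
  · have hupos : 0 < u := by
      rcases eq_or_lt_of_le hg0' with h | h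
      · exact absurd (by rw [← h, Real.tanh_zero]) h0
      · exact h
    have htu : 0 < Real.tanh u := lt_of_le_of_ne (aux_tanh_nonneg u hg0') (Ne.symm h0)
    have hsu : 0 < Real.sinh u := Real.sinh_pos_iff.2 hupos
    have hchu : 0 < Real.cosh u := Real.cosh_pos u
    have hτpos : 0 < Real.tanh u ^ 2 := by positivity
    have hkey2 : m^2 ≤ Y2 * Real.tanh u ^ 2 := by
      set a : ℝ := m / Real.tanh u ^ 2 with hadef
      have h1 := hquad a
      have h2 : a^2 * T ≤ a^2 * Real.tanh u ^ 2 :=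
        mul_le_mul_of_nonneg_left hTle (sq_nonneg _)
      have h3 : 0 ≤ Y2 - 2*a*m + a^2 * Real.tanh u ^ 2 := by linarith
      have h4 : a * Real.tanh u ^ 2 = m := by rw [hadef]; field_simp
      have h5 : a^2 * Real.tanh u ^ 2 = a * m := by
        calc a^2 * Real.tanh u ^ 2 = a * (a * Real.tanh u ^ 2) := by ring
        _ = a * m := by rw [h4]
      have h6 : a * m ≤ Y2 := by linarith
      have h7 : m^2 = (a*m) * Real.tanh u ^ 2 := by
        rw [← h4]; ring
      rw [h7]
      exact mul_le_mul_of_nonneg_right h6 hτpos.le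
    have hch2 : Real.cosh u ^ 2 - Real.sinh u ^ 2 = 1 := Real.cosh_sq_sub_sinh_sq u
    have hkey3 : m^2 * Real.cosh u ^ 2 ≤ Y2 * Real.sinh u ^ 2 := by
      rw [Real.tanh_eq_sinh_div_cosh] at hkey2
      have h1 := mul_le_mul_of_nonneg_right hkey2 (sq_nonneg (Real.cosh u))
      have h5 : Y2 * (Real.sinh u / Real.cosh u)^2 * Real.cosh u ^ 2 = Y2 * Real.sinh u ^ 2 := by
        field_simp
      linarith [h1, h5]
    rw [ge_iff_le]
    have hpos : (0:ℝ) < Real.sinh u ^ 2 := by positivity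
    have e1 : (Y2 - m^2 - m^2 * (1/Real.sinh u)^2) * Real.sinh u ^ 2
        = Y2 * Real.sinh u ^ 2 - m^2 * Real.sinh u ^ 2 - m^2 := by
      field_simp
    have h6 : 0 ≤ (Y2 - m^2 - m^2 * (1/Real.sinh u)^2) * Real.sinh u ^ 2 := by
      rw [e1]
      have h9 : m^2 * Real.cosh u ^ 2 - m^2 * Real.sinh u ^ 2 - m^2 = 0 := by
        linear_combination m^2 * hch2
      linarith [hkey3, h9]
    have h7 := div_nonneg h6 hpos.le
    rw [mul_div_cancel_right₀ _ (ne_of_gt hpos)] at h7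
    linarith [h7]
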